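/- Let α ∈ (1/2, 1) and s > (1−α)/2 with s ≤ 1/2. Then sup over n ∈ ℤ of the sum over pairs of nonzero integers (k, j) with 0 < |kj| ≲ |n|^{2−2α} of ⟨n⟩^{2s}/(⟨n+k⟩^{2s} ⟨n+k+j⟩^{2s} ⟨n+j⟩^{2s}) is finite; in fact the sum is bounded by C ⟨n⟩^{2−2α−4s} log⟨n⟩. -/

import Mathlib

open Real

/-- Japanese bracket of an integer. -/
noncomputable def jb (m : ℤ) : ℝ := Real.sqrt (1 + (m : ℝ) ^ 2)

lemma jb_sq (m : ℤ) : jb m ^ 2 = 1 + (m:ℝ)^2 := Real.sq_sqrt (by positivity)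

lemma jb_nonneg (m : ℤ) : 0 ≤ jb m := Real.sqrt_nonneg _

lemma one_le_jb (m : ℤ) : 1 ≤ jb m := by
  nlinarith [jb_sq m, jb_nonneg m, sq_nonneg ((m:ℝ))]

lemma jb_pos (m : ℤ) : 0 < jb m := lt_of_lt_of_le one_pos (one_le_jb m)

lemma abs_le_jb (m : ℤ) : |(m:ℝ)| ≤ jb m := by
  nlinarith [jb_sq m, jb_nonneg m, sq_abs ((m:ℝ)), abs_nonneg ((m:ℝ))]

lemma jb_mono {a b : ℤ} (h : |(a:ℝ)| ≤ |(b:ℝ)|) : jb a ≤ jb b := by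
  apply Real.sqrt_le_sqrt
  nlinarith [sq_abs ((a:ℝ)), sq_abs ((b:ℝ)), abs_nonneg ((a:ℝ))]

lemma jb_half {a b : ℤ} (h : 2 * |(b:ℝ)| ≤ |(a:ℝ)|) : jb a ≤ 2 * jb (a + b) := by
  have h4 : Real.sqrt 4 = 2 := by
    rw [show (4:ℝ) = 2^2 by norm_num, Real.sqrt_sq (by norm_num)]
  have : jb a ≤ Real.sqrt (4 * (1 + ((a:ℝ)+(b:ℝ))^2)) := by
    apply Real.sqrt_le_sqrt
    nlinarith [sq_abs ((a:ℝ)), sq_abs ((b:ℝ)), abs_nonneg ((a:ℝ)), abs_nonneg ((b:ℝ)),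
      abs_mul ((a:ℝ)) ((b:ℝ)), neg_abs_le ((a:ℝ)*(b:ℝ)),
      mul_nonneg (sub_nonneg.2 h) (abs_nonneg ((a:ℝ)))]
  rwa [Real.sqrt_mul (by norm_num), h4, jb, ← Int.cast_add] at this

lemma sqrt_two_le_jb {m : ℤ} (hm : m ≠ 0) : Real.sqrt 2 ≤ jb m := by
  apply Real.sqrt_le_sqrt
  have : (1:ℝ) ≤ (m:ℝ)^2 := by
    have : (1:ℤ) ≤ m^2 := by nlinarith [Int.one_le_abs hm, sq_abs m, abs_nonneg m]
    exact_mod_cast this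
  linarith

lemma one_le_abs_mul {a b : ℤ} (ha : a ≠ 0) (hb : b ≠ 0) : (1:ℝ) ≤ |(a:ℝ) * (b:ℝ)| := by
  have : (1:ℤ) ≤ |a * b| := Int.one_le_abs (mul_ne_zero ha hb)
  calc (1:ℝ) ≤ ((|a*b| : ℤ) : ℝ) := by exact_mod_cast this
    _ = |(a:ℝ)*(b:ℝ)| := by push_cast; rfl

lemma abs_le_of_abs_mul_le {a b : ℤ} (hb : b ≠ 0) {R : ℝ}
    (h : |(a:ℝ) * (b:ℝ)| ≤ R) : |(a:ℝ)| ≤ R := by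
  have hb1 : (1:ℝ) ≤ |(b:ℝ)| := by
    have : (1:ℤ) ≤ |b| := Int.one_le_abs hb
    calc (1:ℝ) ≤ ((|b| : ℤ) : ℝ) := by exact_mod_cast this
      _ = |(b:ℝ)| := by push_cast; rfl
  refine le_trans ?_ h
  rw [abs_mul]
  exact le_mul_of_one_le_right (abs_nonneg _) hb1

lemma harmonic_Icc (K : ℤ) :
    ∑ k ∈ Finset.Icc (1:ℤ) K, ((k:ℝ))⁻¹ = (harmonic K.toNat : ℝ) := by
  rw [harmonic, Rat.cast_sum]
  apply Finset.sum_nbij' (fun k : ℤ => (k-1).toNat) (fun i : ℕ => (i:ℤ)+1)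
  · intro a ha; simp only [Finset.mem_Icc] at ha; simp only [Finset.mem_range]; omega
  · intro a ha; simp only [Finset.mem_range] at ha; simp only [Finset.mem_Icc]; omega
  · intro a ha; simp only [Finset.mem_Icc] at ha; omega
  · intro a ha; simp only [Finset.mem_range] at ha; omega
  · intro a ha; simp only [Finset.mem_Icc] at ha
    have h1 : (((a-1).toNat : ℕ) : ℝ) = (a:ℝ) - 1 := by
      exact_mod_cast congrArg (fun z : ℤ => (z : ℝ)) (Int.toNat_of_nonneg (by omega : (0:ℤ) ≤ a - 1))
    push_cast
    rw [h1]
    ring_nf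

lemma sum_inv_Icc_le (K : ℤ) (hK1 : 1 ≤ K) (M : ℝ) (hKM : (K:ℝ) ≤ 2 * M) :
    ∑ k ∈ Finset.Icc (1:ℤ) K, ((k:ℝ))⁻¹ ≤ 1 + Real.log (2 * M) := by
  rw [harmonic_Icc]
  have hKN : ((K.toNat : ℕ) : ℝ) = (K : ℝ) := by
    exact_mod_cast congrArg (fun z : ℤ => (z : ℝ)) (Int.toNat_of_nonneg (by omega : (0:ℤ) ≤ K))
  refine (harmonic_le_one_add_log K.toNat).trans ?_
  gcongr
  · rw [hKN]; exact_mod_cast hK1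
  · rw [hKN]; exact hKM

lemma count_le (M : ℝ) (hM : 1 ≤ M) (K : ℤ) (hK1 : 1 ≤ K) (hK2 : (K:ℝ) ≤ 2*M) :
    ∑ p ∈ Finset.Icc (-K) K ×ˢ Finset.Icc (-K) K,
      (if p.1 ≠ 0 ∧ p.2 ≠ 0 ∧ |(p.1:ℝ) * (p.2:ℝ)| ≤ M then (1:ℝ) else 0)
      ≤ 8 * M * (1 + Real.log (2 * M)) := by
  have hlog : 0 ≤ Real.log (2 * M) := Real.log_nonneg (by linarith)
  rw [Finset.sum_product]
  have hg : ∀ k ∈ Finset.Icc (-K) K,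
      (∑ j ∈ Finset.Icc (-K) K, if k ≠ 0 ∧ j ≠ 0 ∧ |(k:ℝ) * (j:ℝ)| ≤ M then (1:ℝ) else 0)
      ≤ (if k = 0 then 0 else 2 * M / |(k:ℝ)| + 1) := by
    intro k _
    by_cases hk : k = 0
    · simp [hk]
    · rw [if_neg hk]
      have hkpos : (0:ℝ) < |(k:ℝ)| := by
        simp only [abs_pos, ne_eq, Int.cast_eq_zero]; exact hk
      set m : ℤ := ⌊M / |(k:ℝ)|⌋ with hm
      have hm0 : 0 ≤ m := Int.le_floor.2 (by push_cast; positivity)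
      calc (∑ j ∈ Finset.Icc (-K) K, if k ≠ 0 ∧ j ≠ 0 ∧ |(k:ℝ) * (j:ℝ)| ≤ M then (1:ℝ) else 0)
          ≤ ∑ j ∈ Finset.Icc (-K) K, (if j ∈ Finset.Icc (-m) m then (1:ℝ) else 0) := by
            apply Finset.sum_le_sum
            intro j _
            by_cases hc : k ≠ 0 ∧ j ≠ 0 ∧ |(k:ℝ) * (j:ℝ)| ≤ M
            · rw [if_pos hc, if_pos]
              obtain ⟨-, -, h3⟩ := hc
              have habs : |(k:ℝ)| * |(j:ℝ)| ≤ M := by rwa [← abs_mul]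
              have hjm : |j| ≤ m := by
                apply Int.le_floor.2
                push_cast
                rw [le_div_iff₀ hkpos, mul_comm]
                exact habs
              rw [Finset.mem_Icc]
              exact abs_le.mp hjm
            · rw [if_neg hc]; positivity
        _ ≤ 2 * (M / |(k:ℝ)|) + 1 := by
            rw [Finset.sum_boole]
            have hsub : (Finset.Icc (-K) K).filter (fun j => j ∈ Finset.Icc (-m) m)
                ⊆ Finset.Icc (-m) m := by
              intro x hx
              exact (Finset.mem_filter.1 hx).2
            have hcard := Finset.card_le_card hsub
            have hcard2 : (Finset.Icc (-m) m).card = (2*m+1).toNat := by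
              rw [Int.card_Icc]; congr 1; ring
            have h1 : ((Finset.Icc (-K) K).filter (fun j => j ∈ Finset.Icc (-m) m)).card
                ≤ (2*m+1).toNat := hcard2 ▸ hcard
            have h2 : (((2*m+1).toNat : ℕ) : ℝ) = 2*(m:ℝ)+1 := by
              exact_mod_cast congrArg (fun z : ℤ => (z : ℝ)) (Int.toNat_of_nonneg (by omega : (0:ℤ) ≤ 2*m+1))
            calc (((Finset.Icc (-K) K).filter (fun j => j ∈ Finset.Icc (-m) m)).card : ℝ)
                ≤ (((2*m+1).toNat : ℕ) : ℝ) := by exact_mod_cast h1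
              _ = 2*(m:ℝ)+1 := h2
              _ ≤ 2 * (M / |(k:ℝ)|) + 1 := by
                  have := Int.floor_le (M / |(k:ℝ)|)
                  rw [← hm] at this
                  linarith
        _ = 2 * M / |(k:ℝ)| + 1 := by ring
  refine (Finset.sum_le_sum hg).trans ?_
  set g : ℤ → ℝ := fun k => if k = 0 then 0 else 2 * M / |(k:ℝ)| + 1 with hgdef
  have hsplit : Finset.Icc (-K) K = Finset.Icc (-K) (-1) ∪ Finset.Icc 0 K := by
    ext x; simp only [Finset.mem_Icc, Finset.mem_union]; omega
  have hdisj : Disjoint (Finset.Icc (-K) (-1)) (Finset.Icc 0 K) := by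
    rw [Finset.disjoint_left]
    intro a h1 h2
    simp only [Finset.mem_Icc] at h1 h2
    omega
  have hneg : ∑ k ∈ Finset.Icc (-K) (-1), g k = ∑ k ∈ Finset.Icc (1:ℤ) K, g (-k) := by
    apply Finset.sum_nbij' (fun k : ℤ => -k) (fun k : ℤ => -k)
    · intro a ha; simp only [Finset.mem_Icc] at ha ⊢; omega
    · intro a ha; simp only [Finset.mem_Icc] at ha ⊢; omega
    · intro a _; ring
    · intro a _; ring
    · intro a _; simp
  have hzero : Finset.Icc (0:ℤ) K = insert 0 (Finset.Icc 1 K) := by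
    ext x; simp only [Finset.mem_Icc, Finset.mem_insert]; omega
  have hgk : ∀ k ∈ Finset.Icc (1:ℤ) K, g k = 2 * M / (k:ℝ) + 1 ∧ g (-k) = 2 * M / (k:ℝ) + 1 := by
    intro k hk
    simp only [Finset.mem_Icc] at hk
    have hk0 : (0:ℝ) < (k:ℝ) := by exact_mod_cast hk.1.trans_lt' (by norm_num)
    constructor
    · rw [hgdef]; simp only []
      rw [if_neg (by omega), abs_of_pos hk0]
    · rw [hgdef]; simp only []
      rw [if_neg (by omega)]
      push_cast
      rw [abs_neg, abs_of_pos hk0]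
  have hsum1 : ∑ k ∈ Finset.Icc (1:ℤ) K, (2 * M / (k:ℝ) + 1) ≤ 2*M*(1 + Real.log (2*M)) + 2*M := by
    rw [Finset.sum_add_distrib]
    have hc : ((Finset.Icc (1:ℤ) K).card : ℝ) ≤ 2*M := by
      rw [Int.card_Icc, show K + 1 - 1 = K from by ring]
      have : ((K.toNat : ℕ) : ℝ) = (K:ℝ) := by
        exact_mod_cast congrArg (fun z : ℤ => (z : ℝ)) (Int.toNat_of_nonneg (by omega : (0:ℤ) ≤ K))
      rw [this]; exact hK2
    have hd : ∑ k ∈ Finset.Icc (1:ℤ) K, 2 * M / (k:ℝ) = 2*M * ∑ k ∈ Finset.Icc (1:ℤ) K, ((k:ℝ))⁻¹ := by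
      rw [Finset.mul_sum]; apply Finset.sum_congr rfl; intro k _; rw [div_eq_mul_inv]
    rw [hd]
    have := sum_inv_Icc_le K hK1 M hK2
    have h2M : (0:ℝ) ≤ 2*M := by linarith
    have hone : ∑ _x ∈ Finset.Icc (1:ℤ) K, (1:ℝ) = ((Finset.Icc (1:ℤ) K).card : ℝ) := by
      rw [Finset.sum_const, nsmul_eq_mul, mul_one]
    have hmul := mul_le_mul_of_nonneg_left this h2M
    rw [hone]
    linarith
  calc ∑ k ∈ Finset.Icc (-K) K, g k
      = ∑ k ∈ Finset.Icc (-K) (-1), g k + ∑ k ∈ Finset.Icc (0:ℤ) K, g k := by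
        rw [hsplit, Finset.sum_union hdisj]
    _ = ∑ k ∈ Finset.Icc (1:ℤ) K, g (-k) + (g 0 + ∑ k ∈ Finset.Icc (1:ℤ) K, g k) := by
        rw [hneg, hzero, Finset.sum_insert (by simp)]
    _ ≤ (2*M*(1 + Real.log (2*M)) + 2*M) + (0 + (2*M*(1 + Real.log (2*M)) + 2*M)) := by
        have e1 : ∑ k ∈ Finset.Icc (1:ℤ) K, g (-k) = ∑ k ∈ Finset.Icc (1:ℤ) K, (2 * M / (k:ℝ) + 1) :=
          Finset.sum_congr rfl (fun k hk => (hgk k hk).2)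
        have e2 : ∑ k ∈ Finset.Icc (1:ℤ) K, g k = ∑ k ∈ Finset.Icc (1:ℤ) K, (2 * M / (k:ℝ) + 1) :=
          Finset.sum_congr rfl (fun k hk => (hgk k hk).1)
        have e3 : g 0 = 0 := by simp [hgdef]
        rw [e1, e2, e3]
        linarith [hsum1]
    _ ≤ 8 * M * (1 + Real.log (2 * M)) := by nlinarith

/-- the cutoff for the `(k,j)` Finset. -/
noncomputable def Kf (A α : ℝ) (m : ℤ) : ℤ := max ⌈A * |(m:ℝ)| ^ (2 - 2*α)⌉ 1

/-- the Finset containing the support in `(k,j)`. -/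
noncomputable def FF (A α : ℝ) (m : ℤ) : Finset (ℤ × ℤ) :=
  Finset.Icc (-(Kf A α m)) (Kf A α m) ×ˢ Finset.Icc (-(Kf A α m)) (Kf A α m)

lemma one_le_Kf (A α : ℝ) (m : ℤ) : 1 ≤ Kf A α m := le_max_right _ _

lemma le_Kf (A α : ℝ) (m : ℤ) : A * |(m:ℝ)| ^ (2 - 2*α) ≤ ((Kf A α m : ℤ) : ℝ) := by
  have h1 : A * |(m:ℝ)| ^ (2 - 2*α) ≤ ((⌈A * |(m:ℝ)| ^ (2 - 2*α)⌉ : ℤ) : ℝ) := Int.le_ceil _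
  have h2 : (⌈A * |(m:ℝ)| ^ (2 - 2*α)⌉ : ℤ) ≤ Kf A α m := le_max_left _ _
  calc A * |(m:ℝ)| ^ (2 - 2*α) ≤ _ := h1
    _ ≤ _ := by exact_mod_cast h2

lemma Kf_eq_ceil {A α : ℝ} {m : ℤ} (h : 1 ≤ A * |(m:ℝ)| ^ (2 - 2*α)) :
    Kf A α m = ⌈A * |(m:ℝ)| ^ (2 - 2*α)⌉ := by
  apply max_eq_left
  have : (1:ℝ) ≤ ((⌈A * |(m:ℝ)| ^ (2 - 2*α)⌉ : ℤ) : ℝ) := le_trans h (Int.le_ceil _)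
  exact_mod_cast this

lemma Kf_mono {A α : ℝ} (hA : 0 ≤ A) (he : 0 ≤ 2 - 2*α) {a : ℤ} {R : ℝ}
    (h : |(a:ℝ)| ≤ R) (hR : 0 ≤ R) :
    ((Kf A α a : ℤ) : ℝ) ≤ max (⌈A * R ^ (2 - 2*α)⌉ : ℤ) 1 := by
  have : Kf A α a ≤ max (⌈A * R ^ (2 - 2*α)⌉ : ℤ) 1 := by
    apply max_le_max ?_ le_rfl
    apply Int.ceil_le_ceil
    exact mul_le_mul_of_nonneg_left (Real.rpow_le_rpow (abs_nonneg _) h he) hA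
  exact_mod_cast this

lemma mem_FF {A α : ℝ} {n : ℤ} {p : ℤ × ℤ} (h1 : p.1 ≠ 0) (h2 : p.2 ≠ 0)
    (h3 : |(p.1:ℝ) * (p.2:ℝ)| ≤ A * |(n:ℝ)| ^ (2 - 2*α)) : p ∈ FF A α n := by
  have hmem : ∀ a b : ℤ, a ≠ 0 → b ≠ 0 → |(a:ℝ)*(b:ℝ)| ≤ A * |(n:ℝ)| ^ (2-2*α) →
      a ∈ Finset.Icc (-(Kf A α n)) (Kf A α n) := by
    intro a b ha hb hab
    have haK : |(a:ℝ)| ≤ ((Kf A α n : ℤ) : ℝ) :=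
      le_trans (abs_le_of_abs_mul_le hb hab) (le_Kf A α n)
    have : |a| ≤ Kf A α n := by
      have : ((|a| : ℤ) : ℝ) ≤ ((Kf A α n : ℤ) : ℝ) := by
        rw [show ((|a| : ℤ) : ℝ) = |(a:ℝ)| from by push_cast; rfl]
        exact haK
      exact_mod_cast this
    rw [Finset.mem_Icc]
    exact abs_le.mp this
  rw [FF, Finset.mem_product]
  exact ⟨hmem p.1 p.2 h1 h2 h3, hmem p.2 p.1 h2 h1 (by rwa [mul_comm] at h3)⟩

lemma card_FF_le {A α : ℝ} (n : ℤ) {Q : ℝ} (hQ : ((Kf A α n : ℤ) : ℝ) ≤ Q) :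
    ((FF A α n).card : ℝ) ≤ (2*Q+1)^2 := by
  have hK1 : 1 ≤ Kf A α n := one_le_Kf A α n
  have hcard : (FF A α n).card = ((2*(Kf A α n)+1).toNat) * ((2*(Kf A α n)+1).toNat) := by
    rw [FF, Finset.card_product, Int.card_Icc,
      show Kf A α n + 1 - -(Kf A α n) = 2*(Kf A α n)+1 from by ring]
  rw [hcard]
  have hc1 : (((2*(Kf A α n)+1).toNat : ℕ) : ℝ) = 2*((Kf A α n : ℤ):ℝ)+1 := by
    exact_mod_cast congrArg (fun z : ℤ => (z : ℝ))
      (Int.toNat_of_nonneg (by omega : (0:ℤ) ≤ 2*(Kf A α n)+1))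
  have hc3 : (1:ℝ) ≤ ((Kf A α n : ℤ):ℝ) := by exact_mod_cast hK1
  push_cast
  rw [show (((2*(Kf A α n)+1).toNat : ℕ) : ℝ) = 2*((Kf A α n : ℤ):ℝ)+1 from hc1]
  nlinarith

/-- denominator comparison in the regime where `k, j` are small compared to `n`. -/
lemma term_bound {s : ℝ} (hs0 : 0 < s) {n k j : ℤ}
    (hk : 2 * |(k:ℝ)| ≤ |(n:ℝ)|) (hj : 2 * |(j:ℝ)| ≤ |(n:ℝ)|)
    (hkj : 2 * |(k:ℝ) + (j:ℝ)| ≤ |(n:ℝ)|) :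
    jb n ^ (2*s) / (jb (n+k) ^ (2*s) * jb (n+k+j) ^ (2*s) * jb (n+j) ^ (2*s))
      ≤ (2:ℝ)^(6*s) * jb n ^ (-(4*s)) := by
  have d1 : jb n ≤ 2 * jb (n + k) := jb_half hk
  have d3 : jb n ≤ 2 * jb (n + j) := jb_half hj
  have d2 : jb n ≤ 2 * jb (n + k + j) := by
    have habs : 2 * |((k + j : ℤ):ℝ)| ≤ |(n:ℝ)| := by push_cast; exact hkj
    have := jb_half (a := n) (b := k + j) habs
    rwa [← add_assoc] at this
  have hhalfpos : (0:ℝ) < jb n / 2 := by linarith [jb_pos n]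
  have e1 : (jb n / 2)^(2*s) ≤ jb (n + k) ^ (2*s) :=
    Real.rpow_le_rpow hhalfpos.le (by linarith) (by linarith)
  have e2 : (jb n / 2)^(2*s) ≤ jb (n + k + j) ^ (2*s) :=
    Real.rpow_le_rpow hhalfpos.le (by linarith) (by linarith)
  have e3 : (jb n / 2)^(2*s) ≤ jb (n + j) ^ (2*s) :=
    Real.rpow_le_rpow hhalfpos.le (by linarith) (by linarith)
  have hp1 : (0:ℝ) ≤ (jb n / 2)^(2*s) := (Real.rpow_pos_of_pos hhalfpos _).le
  have hq1 : (0:ℝ) ≤ jb (n+k) ^ (2*s) := (Real.rpow_pos_of_pos (jb_pos _) _).le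
  have hq2 : (0:ℝ) ≤ jb (n+k+j) ^ (2*s) := (Real.rpow_pos_of_pos (jb_pos _) _).le
  have hden : (jb n / 2)^(2*s) * (jb n / 2)^(2*s) * (jb n / 2)^(2*s)
      ≤ jb (n + k) ^ (2*s) * jb (n + k + j) ^ (2*s) * jb (n + j) ^ (2*s) :=
    mul_le_mul (mul_le_mul e1 e2 hp1 hq1) e3 hp1 (mul_nonneg hq1 hq2)
  have hdpos : (0:ℝ) < (jb n / 2)^(2*s) * (jb n / 2)^(2*s) * (jb n / 2)^(2*s) := by
    have := Real.rpow_pos_of_pos hhalfpos (2*s)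
    positivity
  calc jb n ^ (2*s) / (jb (n+k) ^ (2*s) * jb (n+k+j) ^ (2*s) * jb (n+j) ^ (2*s))
      ≤ jb n ^ (2*s) / ((jb n / 2)^(2*s) * (jb n / 2)^(2*s) * (jb n / 2)^(2*s)) :=
        div_le_div_of_nonneg_left (Real.rpow_nonneg (jb_nonneg n) _) hdpos hden
    _ = (2:ℝ)^(6*s) * jb n ^ (-(4*s)) := by
        rw [← Real.rpow_add hhalfpos, ← Real.rpow_add hhalfpos,
          show 2*s + 2*s + 2*s = 6*s from by ring,
          Real.div_rpow (jb_nonneg n) (by norm_num : (0:ℝ) ≤ 2),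
          div_div_eq_mul_div]
        rw [mul_comm (jb n ^ (2*s)) ((2:ℝ)^(6*s)), mul_div_assoc,
          ← Real.rpow_sub (jb_pos n), show 2*s - 6*s = -(4*s) from by ring]

/-- trivial bound: the denominator is at least 1. -/
lemma term_le_num {s : ℝ} (hs0 : 0 ≤ s) (n k j : ℤ) :
    jb n ^ (2*s) / (jb (n+k) ^ (2*s) * jb (n+k+j) ^ (2*s) * jb (n+j) ^ (2*s))
      ≤ jb n ^ (2*s) := by
  apply div_le_self (Real.rpow_nonneg (jb_nonneg n) _)
  have e1 : (1:ℝ) ≤ jb (n+k) ^ (2*s) := Real.one_le_rpow (one_le_jb _) (by linarith)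
  have e2 : (1:ℝ) ≤ jb (n+k+j) ^ (2*s) := Real.one_le_rpow (one_le_jb _) (by linarith)
  have e3 : (1:ℝ) ≤ jb (n+j) ^ (2*s) := Real.one_le_rpow (one_le_jb _) (by linarith)
  have h12 : (1:ℝ)*1 ≤ jb (n+k) ^ (2*s) * jb (n+k+j) ^ (2*s) :=
    mul_le_mul e1 e2 zero_le_one (by linarith)
  have h123 : (1:ℝ)*1 ≤ (jb (n+k) ^ (2*s) * jb (n+k+j) ^ (2*s)) * jb (n+j) ^ (2*s) :=
    mul_le_mul (by linarith) e3 zero_le_one (by linarith)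
  linarith

lemma one_le_log_jb {n : ℤ} (h : (3:ℝ) ≤ |(n:ℝ)|) : 1 ≤ Real.log (jb n) := by
  rw [Real.le_log_iff_exp_le (jb_pos n)]
  have h1 := Real.exp_one_lt_d9
  have h2 := abs_le_jb n
  linarith

/-- the logarithmic factor estimate for the large regime. -/
lemma log_factor_le {A α : ℝ} (hA : 0 < A) (hα1 : α < 1) (hα : 1/2 < α) {n : ℤ}
    (h3 : (3:ℝ) ≤ |(n:ℝ)|) :
    1 + Real.log (2 * (A * |(n:ℝ)| ^ (2 - 2*α)))
      ≤ (max (1 + Real.log (2*A)) 0 + 2) * Real.log (jb n) := by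
  have hx0 : (0:ℝ) < |(n:ℝ)| := by linarith
  have hjb : |(n:ℝ)| ≤ jb n := abs_le_jb n
  have hL1 : 1 ≤ Real.log (jb n) := one_le_log_jb h3
  have l1 : Real.log (2 * (A * |(n:ℝ)| ^ (2 - 2*α)))
      = Real.log 2 + (Real.log A + (2-2*α) * Real.log |(n:ℝ)|) := by
    rw [Real.log_mul (by norm_num) (by positivity),
      Real.log_mul (ne_of_gt hA) (by positivity), Real.log_rpow hx0]
  have l3 : Real.log |(n:ℝ)| ≤ Real.log (jb n) := Real.log_le_log hx0 hjb
  have l4 : (0:ℝ) ≤ Real.log |(n:ℝ)| := Real.log_nonneg (by linarith)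
  have l5 : (2-2*α) * Real.log |(n:ℝ)| ≤ 2 * Real.log (jb n) := by nlinarith
  have l6 : Real.log 2 + Real.log A = Real.log (2*A) :=
    (Real.log_mul (by norm_num) (ne_of_gt hA)).symm
  have l7 : 1 + Real.log (2*A) ≤ max (1 + Real.log (2*A)) 0 := le_max_left _ _
  have l8 : (0:ℝ) ≤ max (1 + Real.log (2*A)) 0 := le_max_right _ _
  have l9 : max (1 + Real.log (2*A)) 0 ≤ max (1 + Real.log (2*A)) 0 * Real.log (jb n) := by
    nlinarith
  rw [l1]
  linarith

/-- comparison used in the small regime. -/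
lemma small_compare {NN n : ℤ} (hn0 : n ≠ 0) (hjbN : jb n ≤ jb NN)
    {E : ℝ} (hE : -2 ≤ E) {D : ℝ} (hD : 0 < D) :
    D ≤ (D * jb NN ^ 2 / Real.log (Real.sqrt 2)) * jb n ^ E * Real.log (jb n) := by
  have hlgs : 0 < Real.log (Real.sqrt 2) := by
    apply Real.log_pos
    nlinarith [Real.sq_sqrt (by norm_num : (0:ℝ) ≤ 2), Real.sqrt_nonneg 2]
  have hXlb : 1 ≤ jb NN ^ 2 * jb n ^ E := by
    have h1 : jb n ^ ((-2:ℝ)) ≤ jb n ^ E :=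
      Real.rpow_le_rpow_of_exponent_le (one_le_jb n) hE
    have h2 : jb n ^ ((-2:ℝ)) = (jb n ^ 2)⁻¹ := by
      rw [show ((-2:ℝ)) = -((2:ℕ):ℝ) from by norm_num, Real.rpow_neg (jb_nonneg n),
        Real.rpow_natCast]
    have h3 : jb n ^ 2 ≤ jb NN ^ 2 := by nlinarith [jb_nonneg n, jb_pos NN]
    have h4 : (0:ℝ) < jb n ^ 2 := by nlinarith [jb_pos n]
    have h5 : (1:ℝ) ≤ jb NN ^ 2 * (jb n ^ 2)⁻¹ := by
      rw [le_mul_inv_iff₀ h4, one_mul]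
      exact h3
    calc (1:ℝ) ≤ jb NN ^ 2 * (jb n ^ 2)⁻¹ := h5
      _ = jb NN ^ 2 * jb n ^ ((-2:ℝ)) := by rw [h2]
      _ ≤ jb NN ^ 2 * jb n ^ E := by
          apply mul_le_mul_of_nonneg_left h1
          positivity
  have hLlb : Real.log (Real.sqrt 2) ≤ Real.log (jb n) :=
    Real.log_le_log (Real.sqrt_pos.2 (by norm_num)) (sqrt_two_le_jb hn0)
  have key : 1 * Real.log (Real.sqrt 2) ≤ (jb NN ^ 2 * jb n ^ E) * Real.log (jb n) := by
    apply mul_le_mul hXlb hLlb hlgs.le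
    positivity
  have key2 := mul_le_mul_of_nonneg_left key (le_of_lt (div_pos hD hlgs))
  have e1 : (D / Real.log (Real.sqrt 2)) * (1 * Real.log (Real.sqrt 2)) = D := by field_simp
  have e2 : (D / Real.log (Real.sqrt 2)) * ((jb NN ^ 2 * jb n ^ E) * Real.log (jb n))
      = (D * jb NN ^ 2 / Real.log (Real.sqrt 2)) * jb n ^ E * Real.log (jb n) := by
    field_simp
  rw [e1, e2] at key2
  exact key2

/-- choice of the threshold. -/
lemma exists_threshold {α A : ℝ} (hα : 1/2 < α) (hA : 0 < A) :
    ∃ N : ℕ, (3:ℝ) ≤ (N:ℝ) ∧ ∀ x : ℝ, (N:ℝ) ≤ x → A * x ^ (2 - 2*α) ≤ x / 4 := by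
  refine ⟨max 3 ⌈(4*A)^((2*α-1)⁻¹)⌉₊, ?_, ?_⟩
  · have : 3 ≤ max 3 ⌈(4*A)^((2*α-1)⁻¹)⌉₊ := le_max_left _ _
    exact_mod_cast this
  · intro x hx
    have hN3 : (3:ℝ) ≤ ((max 3 ⌈(4*A)^((2*α-1)⁻¹)⌉₊ : ℕ) : ℝ) := by
      have : 3 ≤ max 3 ⌈(4*A)^((2*α-1)⁻¹)⌉₊ := le_max_left _ _
      exact_mod_cast this
    have hx0 : (0:ℝ) < x := by linarith
    have hb : (4*A)^((2*α-1)⁻¹) ≤ x := by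
      have h1 : (4*A)^((2*α-1)⁻¹) ≤ (⌈(4*A)^((2*α-1)⁻¹)⌉₊ : ℝ) := Nat.le_ceil _
      have h2 : ((⌈(4*A)^((2*α-1)⁻¹)⌉₊ : ℕ) : ℝ) ≤ ((max 3 ⌈(4*A)^((2*α-1)⁻¹)⌉₊ : ℕ) : ℝ) := by
        have : ⌈(4*A)^((2*α-1)⁻¹)⌉₊ ≤ max 3 ⌈(4*A)^((2*α-1)⁻¹)⌉₊ := le_max_right _ _
        exact_mod_cast this
      linarith
    have hpow : 4*A ≤ x ^ (2*α-1) := by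
      have := Real.rpow_le_rpow (by positivity) hb (by linarith : (0:ℝ) ≤ 2*α-1)
      rwa [Real.rpow_inv_rpow (by positivity) (by intro h; nlinarith)] at this
    have hxe : x ^ (2-2*α) = x / x ^ (2*α-1) := by
      rw [show (2-2*α) = 1 - (2*α-1) from by ring, Real.rpow_sub hx0, Real.rpow_one]
    rw [hxe]
    have hy : (0:ℝ) < x ^ (2*α-1) := by positivity
    rw [mul_div_assoc', div_le_div_iff₀ hy (by norm_num : (0:ℝ) < 4)]
    nlinarith [mul_le_mul_of_nonneg_right hpow hx0.le]
lemma log_sqrt_two_pos : 0 < Real.log (Real.sqrt 2) := by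
  apply Real.log_pos
  nlinarith [Real.sq_sqrt (by norm_num : (0:ℝ) ≤ 2), Real.sqrt_nonneg 2]

set_option maxHeartbeats 1000000 in
/-- low-interaction sum in the trilinear estimate,
`∑_{0<|kj| ≤ A|n|^{2-2α}} ⟨n⟩^{2s}/(⟨n+k⟩^{2s}⟨n+k+j⟩^{2s}⟨n+j⟩^{2s}) ≲ ⟨n⟩^{2-2α-4s} log⟨n⟩`.
Here `p.1 = k`, `p.2 = j`. -/
theorem stmt_14 (α s A : ℝ) (hα : 1 / 2 < α) (hα1 : α < 1)
    (hs : (1 - α) / 2 < s) (hs2 : s ≤ 1 / 2) (hA : 0 < A) :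
    ∃ C > 0, ∀ n : ℤ,
      (∑' p : ℤ × ℤ,
        if p.1 ≠ 0 ∧ p.2 ≠ 0 ∧ (|p.1 * p.2| : ℝ) ≤ A * (|n| : ℝ) ^ (2 - 2 * α) then
          jb n ^ (2 * s) /
            (jb (n + p.1) ^ (2 * s) * jb (n + p.1 + p.2) ^ (2 * s) * jb (n + p.2) ^ (2 * s))
        else 0)
        ≤ C * jb n ^ (2 - 2 * α - 4 * s) * Real.log (jb n) := by
  classical
  have hs0 : 0 < s := by linarith
  have he0 : (0:ℝ) ≤ 2 - 2*α := by linarith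
  obtain ⟨N, hN3, hNx⟩ := exists_threshold (A := A) hα hA
  obtain ⟨Q, hQ1, hQmaj⟩ : ∃ Q : ℝ, 1 ≤ Q ∧
      ∀ m : ℤ, |(m:ℝ)| ≤ (N:ℝ) → ((Kf A α m : ℤ) : ℝ) ≤ Q :=
    ⟨((max ⌈A * (N:ℝ) ^ (2 - 2*α)⌉ 1 : ℤ) : ℝ),
      by exact_mod_cast (le_max_right ⌈A * (N:ℝ) ^ (2 - 2*α)⌉ 1),
      fun m hm => Kf_mono hA.le he0 hm (Nat.cast_nonneg N)⟩
  set c₀ : ℝ := max (1 + Real.log (2*A)) 0 + 2 with hc₀def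
  have hc₀pos : 0 < c₀ := by
    have := le_max_right (1 + Real.log (2*A)) 0
    rw [hc₀def]; linarith
  set C1 : ℝ := (2:ℝ)^(6*s) * 8 * A * c₀ with hC1def
  have hC1pos : 0 < C1 := by
    have h2 : (0:ℝ) < (2:ℝ)^(6*s) := Real.rpow_pos_of_pos (by norm_num) _
    rw [hC1def]
    exact mul_pos (mul_pos (mul_pos h2 (by norm_num)) hA) hc₀pos
  set D : ℝ := (2*Q+1)^2 * jb (N:ℤ) with hDdef
  have hDpos : 0 < D := by
    have h1 : (0:ℝ) < (2*Q+1)^2 := by nlinarith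
    rw [hDdef]; exact mul_pos h1 (jb_pos _)
  set C2 : ℝ := D * jb (N:ℤ)^2 / Real.log (Real.sqrt 2) with hC2def
  have hC2pos : 0 < C2 := by
    rw [hC2def]
    exact div_pos (mul_pos hDpos (pow_pos (jb_pos _) 2)) log_sqrt_two_pos
  refine ⟨C1 + C2, by linarith, ?_⟩
  intro n
  have hvan : ∀ p : ℤ × ℤ, p ∉ FF A α n →
      (if p.1 ≠ 0 ∧ p.2 ≠ 0 ∧ (|p.1 * p.2| : ℝ) ≤ A * (|n| : ℝ) ^ (2 - 2 * α) then
          jb n ^ (2 * s) /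
            (jb (n + p.1) ^ (2 * s) * jb (n + p.1 + p.2) ^ (2 * s) * jb (n + p.2) ^ (2 * s))
        else 0) = 0 := by
    intro p hp
    rw [if_neg]
    rintro ⟨h1, h2, h3⟩
    exact hp (mem_FF h1 h2 h3)
  rw [tsum_eq_sum hvan]
  have hX : 0 < jb n ^ (2 - 2*α - 4*s) := Real.rpow_pos_of_pos (jb_pos n) _
  have hL0 : 0 ≤ Real.log (jb n) := Real.log_nonneg (one_le_jb n)
  have hRHS1 : 0 ≤ C1 * jb n ^ (2 - 2*α - 4*s) * Real.log (jb n) :=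
    mul_nonneg (mul_nonneg hC1pos.le hX.le) hL0
  have hRHS2 : 0 ≤ C2 * jb n ^ (2 - 2*α - 4*s) * Real.log (jb n) :=
    mul_nonneg (mul_nonneg hC2pos.le hX.le) hL0
  have hsplitC : (C1 + C2) * jb n ^ (2 - 2*α - 4*s) * Real.log (jb n)
      = C1 * jb n ^ (2 - 2*α - 4*s) * Real.log (jb n)
        + C2 * jb n ^ (2 - 2*α - 4*s) * Real.log (jb n) := by ring
  by_cases hbig : (N:ℝ) ≤ |(n:ℝ)|
  · -- large |n|
    by_cases hM1 : 1 ≤ A * |(n:ℝ)| ^ (2 - 2*α)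
    · have hM4 : A * |(n:ℝ)| ^ (2 - 2*α) ≤ |(n:ℝ)| / 4 := hNx _ hbig
      have h3n : (3:ℝ) ≤ |(n:ℝ)| := le_trans hN3 hbig
      have hK1 : 1 ≤ Kf A α n := one_le_Kf A α n
      have hK2 : ((Kf A α n : ℤ) : ℝ) ≤ 2 * (A * |(n:ℝ)| ^ (2 - 2*α)) := by
        rw [Kf_eq_ceil hM1]
        have := Int.ceil_lt_add_one (A * |(n:ℝ)| ^ (2 - 2*α))
        linarith
      have hcount := count_le (A * |(n:ℝ)| ^ (2 - 2*α)) hM1 (Kf A α n) hK1 hK2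
      set B : ℝ := (2:ℝ)^(6*s) * jb n ^ (-(4*s)) with hBdef
      have hBpos : 0 < B := by
        rw [hBdef]
        exact mul_pos (Real.rpow_pos_of_pos (by norm_num) _)
          (Real.rpow_pos_of_pos (jb_pos n) _)
      have hterm : ∀ p ∈ FF A α n,
          (if p.1 ≠ 0 ∧ p.2 ≠ 0 ∧ (|p.1 * p.2| : ℝ) ≤ A * (|n| : ℝ) ^ (2 - 2 * α) then
            jb n ^ (2 * s) /
              (jb (n + p.1) ^ (2 * s) * jb (n + p.1 + p.2) ^ (2 * s) * jb (n + p.2) ^ (2 * s))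
          else 0)
          ≤ (if p.1 ≠ 0 ∧ p.2 ≠ 0 ∧ (|p.1 * p.2| : ℝ) ≤ A * (|n| : ℝ) ^ (2 - 2 * α) then (1:ℝ) else 0) * B := by
        intro p _
        by_cases hc : p.1 ≠ 0 ∧ p.2 ≠ 0 ∧ (|p.1 * p.2| : ℝ) ≤ A * (|n| : ℝ) ^ (2 - 2 * α)
        · rw [if_pos hc, if_pos hc, one_mul, hBdef]
          obtain ⟨h1, h2, h3⟩ := hc
          have hk : |(p.1:ℝ)| ≤ A * |(n:ℝ)| ^ (2 - 2*α) := abs_le_of_abs_mul_le h2 h3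
          have hj : |(p.2:ℝ)| ≤ A * |(n:ℝ)| ^ (2 - 2*α) :=
            abs_le_of_abs_mul_le h1 (by rwa [mul_comm] at h3)
          have habsn : (0:ℝ) ≤ |(n:ℝ)| := abs_nonneg _
          apply term_bound hs0
          · linarith
          · linarith
          · have := abs_add_le ((p.1:ℝ)) ((p.2:ℝ))
            linarith
        · rw [if_neg hc, if_neg hc, zero_mul]
      have hFFeq : FF A α n
          = Finset.Icc (-(Kf A α n)) (Kf A α n) ×ˢ Finset.Icc (-(Kf A α n)) (Kf A α n) := rfl
      calc (∑ p ∈ FF A α n,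
            if p.1 ≠ 0 ∧ p.2 ≠ 0 ∧ (|p.1 * p.2| : ℝ) ≤ A * (|n| : ℝ) ^ (2 - 2 * α) then
              jb n ^ (2 * s) /
                (jb (n + p.1) ^ (2 * s) * jb (n + p.1 + p.2) ^ (2 * s) * jb (n + p.2) ^ (2 * s))
            else 0)
          ≤ ∑ p ∈ FF A α n,
            (if p.1 ≠ 0 ∧ p.2 ≠ 0 ∧ (|p.1 * p.2| : ℝ) ≤ A * (|n| : ℝ) ^ (2 - 2 * α) then (1:ℝ) else 0) * B :=
            Finset.sum_le_sum hterm
        _ = (∑ p ∈ FF A α n,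
            (if p.1 ≠ 0 ∧ p.2 ≠ 0 ∧ (|p.1 * p.2| : ℝ) ≤ A * (|n| : ℝ) ^ (2 - 2 * α) then (1:ℝ) else 0)) * B := by
            rw [Finset.sum_mul]
        _ ≤ (8 * (A * |(n:ℝ)| ^ (2 - 2*α)) * (1 + Real.log (2 * (A * |(n:ℝ)| ^ (2 - 2*α))))) * B := by
            apply mul_le_mul_of_nonneg_right ?_ hBpos.le
            rw [hFFeq]
            exact hcount
        _ ≤ (8 * (A * jb n ^ (2 - 2*α)) * (c₀ * Real.log (jb n))) * B := by
            apply mul_le_mul_of_nonneg_right ?_ hBpos.le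
            have hlog := log_factor_le hA hα1 hα h3n
            have hMle : A * |(n:ℝ)| ^ (2 - 2*α) ≤ A * jb n ^ (2 - 2*α) :=
              mul_le_mul_of_nonneg_left
                (Real.rpow_le_rpow (abs_nonneg _) (abs_le_jb n) he0) hA.le
            have hlog0 : (0:ℝ) ≤ 1 + Real.log (2 * (A * |(n:ℝ)| ^ (2 - 2*α))) := by
              have : (0:ℝ) ≤ Real.log (2 * (A * |(n:ℝ)| ^ (2 - 2*α))) :=
                Real.log_nonneg (by linarith)
              linarith
            apply mul_le_mul ?_ ?_ hlog0 ?_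
            · linarith
            · rw [hc₀def]; exact hlog
            · have : (0:ℝ) ≤ jb n ^ (2 - 2*α) := Real.rpow_nonneg (jb_nonneg n) _
              nlinarith
        _ = C1 * (jb n ^ (2 - 2*α) * jb n ^ (-(4*s))) * Real.log (jb n) := by
            rw [hBdef, hC1def]; ring
        _ = C1 * jb n ^ (2 - 2*α - 4*s) * Real.log (jb n) := by
            rw [← Real.rpow_add (jb_pos n),
              show (2 - 2*α) + -(4*s) = 2 - 2*α - 4*s from by ring]
        _ ≤ (C1 + C2) * jb n ^ (2 - 2*α - 4*s) * Real.log (jb n) := by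
            rw [hsplitC]; linarith
    · -- A |n|^(2-2α) < 1 : empty sum
      push_neg at hM1
      rw [Finset.sum_eq_zero, hsplitC]
      · linarith
      · intro p _
        rw [if_neg]
        rintro ⟨h1, h2, h3⟩
        have := one_le_abs_mul h1 h2
        linarith
  · -- small |n|
    push_neg at hbig
    by_cases hn0 : n = 0
    · -- n = 0 : empty sum
      have hz : A * |(n:ℝ)| ^ (2 - 2*α) = 0 := by
        rw [hn0]
        rw [show ((0:ℤ):ℝ) = (0:ℝ) from by norm_num, abs_zero,
          Real.zero_rpow (by intro h; nlinarith), mul_zero]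
      rw [Finset.sum_eq_zero, hsplitC]
      · linarith
      · intro p _
        rw [if_neg]
        rintro ⟨h1, h2, h3⟩
        have := one_le_abs_mul h1 h2
        rw [hz] at h3
        linarith
    · have hterm : ∀ p ∈ FF A α n,
          (if p.1 ≠ 0 ∧ p.2 ≠ 0 ∧ (|p.1 * p.2| : ℝ) ≤ A * (|n| : ℝ) ^ (2 - 2 * α) then
            jb n ^ (2 * s) /
              (jb (n + p.1) ^ (2 * s) * jb (n + p.1 + p.2) ^ (2 * s) * jb (n + p.2) ^ (2 * s))
          else 0) ≤ jb n ^ (2*s) := by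
        intro p _
        by_cases hc : p.1 ≠ 0 ∧ p.2 ≠ 0 ∧ (|p.1 * p.2| : ℝ) ≤ A * (|n| : ℝ) ^ (2 - 2 * α)
        · rw [if_pos hc]
          exact term_le_num hs0.le n p.1 p.2
        · rw [if_neg hc]
          exact Real.rpow_nonneg (jb_nonneg n) _
      have hjbN : jb n ≤ jb (N:ℤ) := by
        apply jb_mono
        rw [show |((N:ℤ):ℝ)| = ((N:ℕ):ℝ) from by
          rw [Int.cast_natCast, abs_of_nonneg (Nat.cast_nonneg N)]]
        exact hbig.le
      have hsum := Finset.sum_le_card_nsmul (FF A α n) _ (jb n ^ (2*s)) hterm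
      rw [nsmul_eq_mul] at hsum
      have hcard : ((FF A α n).card : ℝ) ≤ (2*Q+1)^2 := card_FF_le n (hQmaj n hbig.le)
      have hpow : jb n ^ (2*s) ≤ jb (N:ℤ) := by
        calc jb n ^ (2*s) ≤ jb n ^ (1:ℝ) :=
              Real.rpow_le_rpow_of_exponent_le (one_le_jb n) (by linarith)
          _ = jb n := Real.rpow_one _
          _ ≤ jb (N:ℤ) := hjbN
      have hD : (∑ p ∈ FF A α n,
          if p.1 ≠ 0 ∧ p.2 ≠ 0 ∧ (|p.1 * p.2| : ℝ) ≤ A * (|n| : ℝ) ^ (2 - 2 * α) then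
            jb n ^ (2 * s) /
              (jb (n + p.1) ^ (2 * s) * jb (n + p.1 + p.2) ^ (2 * s) * jb (n + p.2) ^ (2 * s))
          else 0) ≤ D := by
        rw [hDdef]
        calc _ ≤ ((FF A α n).card : ℝ) * jb n ^ (2*s) := hsum
          _ ≤ (2*Q+1)^2 * jb (N:ℤ) := by
              apply mul_le_mul hcard hpow (Real.rpow_nonneg (jb_nonneg n) _)
              nlinarith
      refine le_trans hD ?_
      have hcomp : D ≤ C2 * jb n ^ (2 - 2*α - 4*s) * Real.log (jb n) := by
        rw [hC2def]
        exact small_compare (E := 2 - 2*α - 4*s) hn0 hjbN (by linarith) hDpos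
      rw [hsplitC]
      linarith
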